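/- Let 0 ≤ β₁ < 1, 0 ≤ β₂ < 1, p ≥ 1, q > 1 with 1/p + 1/q = 1, and suppose β₁ < β₂^{1/p}. Let t ≥ 1 and g₁,…,g_t real numbers not all zero. Define n = (1-β₁)(Σ_{k=1}^t β₁^{t-k+1} g_k + g_t) and b = ((1-β₂)(Σ_{k=1}^t β₂^{t-k+1} |g_k|^p + |g_t|^p))^{1/p}. Then |n|/b ≤ (1-β₁) / ((1-β₂)^{1/p} · (1 - β₁^q/β₂^{q/p})^{1/q}). -/

import Mathlib

theorem s3_update_bound
    (β₁ β₂ p q : ℝ) (hβ₁0 : 0 ≤ β₁) (hβ₁1 : β₁ < 1) (hβ₂0 : 0 ≤ β₂) (hβ₂1 : β₂ < 1)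
    (hp : 1 ≤ p) (hq : 1 < q) (hpq : 1 / p + 1 / q = 1)
    (hββ : β₁ < β₂ ^ (1 / p)) (t : ℕ) (ht : 1 ≤ t) (g : ℕ → ℝ)
    (hg : ∃ k ∈ Finset.Icc 1 t, g k ≠ 0) :
    |(1 - β₁) * ((∑ k ∈ Finset.Icc 1 t, β₁ ^ (t - k + 1) * g k) + g t)| /
      ((1 - β₂) * ((∑ k ∈ Finset.Icc 1 t, β₂ ^ (t - k + 1) * |g k| ^ p) + |g t| ^ p)) ^ (1 / p)
    ≤ (1 - β₁) / ((1 - β₂) ^ (1 / p) * (1 - β₁ ^ q / β₂ ^ (q / p)) ^ (1 / q)) := by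
  have hq0 : 0 < q := lt_trans one_pos hq
  have hp1 : 1 < p := by
    by_contra h
    push_neg at h
    have hpe : p = 1 := le_antisymm h hp
    rw [hpe] at hpq
    have h1 : 1 / q = 0 := by linarith
    rw [div_eq_zero_iff] at h1
    rcases h1 with h1 | h1 <;> [norm_num at h1; linarith]
  have hp0 : 0 < p := lt_trans one_pos hp1
  have hβ₂pos : 0 < β₂ := by
    rcases lt_or_eq_of_le hβ₂0 with h | h
    · exact h
    · exfalso
      rw [← h, Real.zero_rpow (by positivity)] at hββ
      exact absurd hββ (not_lt.2 hβ₁0)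
  set c : ℝ := β₂ ^ (1 / p) with hc
  have hcpos : 0 < c := Real.rpow_pos_of_pos hβ₂pos _
  have hcp : c ^ p = β₂ := by
    rw [hc, ← Real.rpow_mul hβ₂0, one_div, inv_mul_cancel₀ (ne_of_gt hp0), Real.rpow_one]
  have hcq : c ^ q = β₂ ^ (q / p) := by
    rw [hc, ← Real.rpow_mul hβ₂0, one_div, inv_mul_eq_div]
  set r : ℝ := β₁ ^ q / β₂ ^ (q / p) with hrdef
  have hr0 : 0 ≤ r := by positivity
  have hr1 : r < 1 := by
    rw [hrdef, div_lt_one (by positivity)]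
    calc β₁ ^ q < c ^ q := Real.rpow_lt_rpow hβ₁0 hββ hq0
      _ = β₂ ^ (q / p) := hcq
  have h1r : 0 < 1 - r := by linarith
  -- extended index functions
  set F : ℕ → ℝ := fun k => (β₁ / c) ^ (t + 1 - k) with hF
  set H : ℕ → ℝ := fun k => c ^ (t + 1 - k) * |g (min k t)| with hH
  have hins : Finset.Icc 1 (t + 1) = insert (t + 1) (Finset.Icc 1 t) :=
    (Finset.insert_Icc_right_eq_Icc_add_one (by omega)).symm
  have hnm : (t + 1) ∉ Finset.Icc 1 t := by simp
  set D : ℝ := (∑ k ∈ Finset.Icc 1 t, β₂ ^ (t - k + 1) * |g k| ^ p) + |g t| ^ p with hD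
  set N : ℝ := (∑ k ∈ Finset.Icc 1 t, β₁ ^ (t - k + 1) * g k) + g t with hN
  -- ∑ F * H
  have sumFH : ∑ k ∈ Finset.Icc 1 (t + 1), F k * H k
      = (∑ k ∈ Finset.Icc 1 t, β₁ ^ (t - k + 1) * |g k|) + |g t| := by
    rw [hins, Finset.sum_insert hnm]
    have h1 : F (t + 1) * H (t + 1) = |g t| := by
      simp [hF, hH]
    rw [h1]
    have h2 : ∀ k ∈ Finset.Icc 1 t, F k * H k = β₁ ^ (t - k + 1) * |g k| := by
      intro k hk
      rw [Finset.mem_Icc] at hk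
      have he : t + 1 - k = t - k + 1 := by omega
      have hm : min k t = k := by omega
      rw [hF, hH]
      simp only
      rw [he, hm, ← mul_assoc, ← mul_pow, div_mul_cancel₀ _ (ne_of_gt hcpos)]
    rw [Finset.sum_congr rfl h2]
    ring
  -- ∑ H ^ p
  have keyc : ∀ n : ℕ, ((c : ℝ) ^ n) ^ p = β₂ ^ n := by
    intro n
    rw [← Real.rpow_natCast c n, ← Real.rpow_mul hcpos.le, mul_comm (n : ℝ) p,
      Real.rpow_mul hcpos.le, hcp, Real.rpow_natCast]
  have sumHp : ∑ k ∈ Finset.Icc 1 (t + 1), H k ^ p = D := by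
    rw [hins, Finset.sum_insert hnm]
    have h1 : H (t + 1) ^ p = |g t| ^ p := by simp [hH]
    rw [h1]
    have h2 : ∀ k ∈ Finset.Icc 1 t, H k ^ p = β₂ ^ (t - k + 1) * |g k| ^ p := by
      intro k hk
      rw [Finset.mem_Icc] at hk
      have he : t + 1 - k = t - k + 1 := by omega
      have hm : min k t = k := by omega
      rw [hH]
      simp only
      rw [he, hm, Real.mul_rpow (by positivity) (abs_nonneg _), keyc]
    rw [Finset.sum_congr rfl h2, hD]
    ring
  -- end sumHp
  -- ∑ F ^ q
  have keyr : ∀ n : ℕ, ((β₁ / c : ℝ) ^ n) ^ q = r ^ n := by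
    intro n
    rw [← Real.rpow_natCast (β₁ / c) n, ← Real.rpow_mul (by positivity), mul_comm (n : ℝ) q,
      Real.rpow_mul (by positivity), Real.div_rpow hβ₁0 hcpos.le, hcq, Real.rpow_natCast]
  have sumFq : ∑ k ∈ Finset.Icc 1 (t + 1), F k ^ q ≤ 1 / (1 - r) := by
    have h2 : ∀ k ∈ Finset.Icc 1 (t + 1), F k ^ q = r ^ (t + 1 - k) := fun k _ => keyr _
    rw [Finset.sum_congr rfl h2]
    have h3 : ∑ k ∈ Finset.Icc 1 (t + 1), r ^ (t + 1 - k)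
        = ∑ j ∈ Finset.range (t + 1), r ^ j := by
      rw [← Finset.Ico_add_one_right_eq_Icc, Finset.sum_Ico_eq_sum_range]
      have h4 : ∀ i ∈ Finset.range (t + 1 + 1 - 1), r ^ (t + 1 - (1 + i)) = r ^ (t - i) := by
        intro i hi
        congr 1
        omega
      rw [Finset.sum_congr rfl h4]
      have := Finset.sum_range_reflect (fun j => r ^ j) (t + 1)
      rw [← this]
      apply Finset.sum_congr rfl
      intro i hi
      rw [Finset.mem_range] at hi
      have hii : t + 1 - 1 - i = t - i := by omega
      rw [hii]
    rw [h3, geom_sum_eq (ne_of_lt hr1)]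
    have he : (r ^ (t + 1) - 1) / (r - 1) = (1 - r ^ (t + 1)) / (1 - r) := by
      have hne : r - 1 ≠ 0 := by linarith
      have hne2 : (1 : ℝ) - r ≠ 0 := by linarith
      field_simp
      ring
    rw [he]
    gcongr
    have := pow_nonneg hr0 (t + 1)
    linarith
  -- Hölder
  have hconj : Real.HolderConjugate p q := Real.holderConjugate_iff.mpr ⟨hp1, by rw [← one_div, ← one_div]; exact hpq⟩
  have holder := Real.inner_le_Lp_mul_Lq (Finset.Icc 1 (t + 1)) H F hconj
  have habsH : ∀ k ∈ Finset.Icc 1 (t + 1), |H k| ^ p = H k ^ p := by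
    intro k _
    rw [abs_of_nonneg (by positivity)]
  have habsF : ∀ k ∈ Finset.Icc 1 (t + 1), |F k| ^ q = F k ^ q := by
    intro k _
    rw [abs_of_nonneg (by positivity)]
  rw [Finset.sum_congr rfl habsH, Finset.sum_congr rfl habsF, sumHp] at holder
  have hmulcomm : ∑ k ∈ Finset.Icc 1 (t + 1), H k * F k
      = ∑ k ∈ Finset.Icc 1 (t + 1), F k * H k := by
    apply Finset.sum_congr rfl; intro k _; ring
  rw [hmulcomm, sumFH] at holder
  -- D positivity
  have hDpos : 0 < D := by
    rw [hD]
    obtain ⟨k₀, hk₀, hgk₀⟩ := hg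
    have hterm : 0 < β₂ ^ (t - k₀ + 1) * |g k₀| ^ p := by
      have : 0 < |g k₀| := abs_pos.mpr hgk₀
      positivity
    have hsum : 0 < ∑ k ∈ Finset.Icc 1 t, β₂ ^ (t - k + 1) * |g k| ^ p := by
      apply Finset.sum_pos' (fun k _ => by positivity) ⟨k₀, hk₀, hterm⟩
    have : (0 : ℝ) ≤ |g t| ^ p := by positivity
    linarith
  -- |N| bound
  have hNb : |N| ≤ (∑ k ∈ Finset.Icc 1 t, β₁ ^ (t - k + 1) * |g k|) + |g t| := by
    rw [hN]
    calc |(∑ k ∈ Finset.Icc 1 t, β₁ ^ (t - k + 1) * g k) + g t|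
        ≤ |∑ k ∈ Finset.Icc 1 t, β₁ ^ (t - k + 1) * g k| + |g t| := abs_add_le _ _
      _ ≤ (∑ k ∈ Finset.Icc 1 t, β₁ ^ (t - k + 1) * |g k|) + |g t| := by
          refine add_le_add ?_ le_rfl
          calc |∑ k ∈ Finset.Icc 1 t, β₁ ^ (t - k + 1) * g k|
              ≤ ∑ k ∈ Finset.Icc 1 t, |β₁ ^ (t - k + 1) * g k| :=
                Finset.abs_sum_le_sum_abs _ _
            _ = ∑ k ∈ Finset.Icc 1 t, β₁ ^ (t - k + 1) * |g k| := by
                apply Finset.sum_congr rfl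
                intro k _
                rw [abs_mul, abs_of_nonneg (by positivity)]
  have hsumFqnn : 0 ≤ ∑ k ∈ Finset.Icc 1 (t + 1), F k ^ q :=
    Finset.sum_nonneg fun k _ => by positivity
  have hA : (∑ k ∈ Finset.Icc 1 (t + 1), F k ^ q) ^ (1 / q) ≤ ((1 - r) ^ (1 / q))⁻¹ := by
    calc (∑ k ∈ Finset.Icc 1 (t + 1), F k ^ q) ^ (1 / q)
        ≤ (1 / (1 - r)) ^ (1 / q) := Real.rpow_le_rpow hsumFqnn sumFq (by positivity)
      _ = ((1 - r) ^ (1 / q))⁻¹ := by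
          rw [one_div, Real.inv_rpow h1r.le]
  have hNb2 : |N| * (1 - r) ^ (1 / q) ≤ D ^ (1 / p) := by
    have h1 : |N| ≤ D ^ (1 / p) * ((1 - r) ^ (1 / q))⁻¹ := by
      refine le_trans hNb (le_trans holder ?_)
      exact mul_le_mul_of_nonneg_left hA (Real.rpow_nonneg hDpos.le _)
    have h2 : 0 < (1 - r) ^ (1 / q) := Real.rpow_pos_of_pos h1r _
    calc |N| * (1 - r) ^ (1 / q)
        ≤ (D ^ (1 / p) * ((1 - r) ^ (1 / q))⁻¹) * (1 - r) ^ (1 / q) :=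
          mul_le_mul_of_nonneg_right h1 h2.le
      _ = D ^ (1 / p) := by field_simp
  -- final assembly
  have h1β₂ : (0:ℝ) < 1 - β₂ := by linarith
  have hden : ((1 - β₂) * D) ^ (1 / p) = (1 - β₂) ^ (1 / p) * D ^ (1 / p) :=
    Real.mul_rpow h1β₂.le hDpos.le
  rw [abs_mul, abs_of_nonneg (by linarith : (0:ℝ) ≤ 1 - β₁), hden]
  have hd1 : 0 < (1 - β₂) ^ (1 / p) * D ^ (1 / p) := by
    have := Real.rpow_pos_of_pos h1β₂ (1 / p)
    have := Real.rpow_pos_of_pos hDpos (1 / p)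
    positivity
  have hd2 : 0 < (1 - β₂) ^ (1 / p) * (1 - r) ^ (1 / q) := by
    have := Real.rpow_pos_of_pos h1β₂ (1 / p)
    have := Real.rpow_pos_of_pos h1r (1 / q)
    positivity
  rw [div_le_div_iff₀ hd1 hd2]
  have hfac : (0:ℝ) ≤ (1 - β₁) * (1 - β₂) ^ (1 / p) := by
    have := Real.rpow_pos_of_pos h1β₂ (1 / p)
    nlinarith
  calc (1 - β₁) * |N| * ((1 - β₂) ^ (1 / p) * (1 - r) ^ (1 / q))
      = ((1 - β₁) * (1 - β₂) ^ (1 / p)) * (|N| * (1 - r) ^ (1 / q)) := by ring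
    _ ≤ ((1 - β₁) * (1 - β₂) ^ (1 / p)) * D ^ (1 / p) :=
        mul_le_mul_of_nonneg_left hNb2 hfac
    _ = (1 - β₁) * ((1 - β₂) ^ (1 / p) * D ^ (1 / p)) := by ring
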